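/- Let Σ, Σ̂ ∈ ℝ^{p×p} be symmetric matrices with eigenvalues λ₁ ≥ … ≥ λ_p and λ̂₁ ≥ … ≥ λ̂_p respectively, fix 1 ≤ r ≤ s ≤ p with d := s − r + 1, and assume δ := min(λ_{r−1} − λ_r, λ_s − λ_{s+1}) > 0 (with λ₀ := ∞, λ_{p+1} := −∞). Let Λ := diag(λ_r, …, λ_s), let V = (v_r, …, v_s) ∈ ℝ^{p×d} and V̂ = (v̂_r, …, v̂_s) ∈ ℝ^{p×d} have orthonormal columns satisfying Σv_j = λ_j v_j and Σ̂v̂_j = λ̂_j v̂_j for j = r, …, s. Then there exists an orthogonal matrix Ô ∈ ℝ^{d×d} such that ‖V̂Ô − V‖_F ≤ 2^{1/2} ‖V̂Λ − ΣV̂‖_F / δ. -/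

import Mathlib

set_option maxHeartbeats 1000000

open Matrix

lemma dot_mulVec_left {m n : Type*} [Fintype m] [Fintype n] (M : Matrix m n ℝ)
    (v : n → ℝ) (w : m → ℝ) : (M *ᵥ v) ⬝ᵥ w = v ⬝ᵥ (Mᵀ *ᵥ w) := by
  rw [dotProduct_comm, dotProduct_mulVec, ← mulVec_transpose]; exact dotProduct_comm _ _

lemma dot_nonneg {n : Type*} [Fintype n] (x : n → ℝ) : 0 ≤ x ⬝ᵥ x :=
  Finset.sum_nonneg fun i _ => mul_self_nonneg _

lemma dot_eq_zero {n : Type*} [Fintype n] (x : n → ℝ) (h : x ⬝ᵥ x = 0) : x = 0 := by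
  funext i
  have := (Finset.sum_eq_zero_iff_of_nonneg (fun i _ => mul_self_nonneg (x i))).mp h i
    (Finset.mem_univ i)
  simpa [mul_self_eq_zero] using this

lemma gram_one {d : ℕ} (f : Fin d → EuclideanSpace ℝ (Fin d)) (hf : Orthonormal ℝ f) :
    (Matrix.of fun k i => f i k)ᵀ * (Matrix.of fun k i => f i k) = 1 := by
  ext i j
  have := orthonormal_iff_ite.mp hf i j
  simp only [PiLp.inner_apply, RCLike.inner_apply, starRingEnd_apply, star_trivial] at this
  simp only [Matrix.mul_apply, Matrix.transpose_apply, Matrix.of_apply, Matrix.one_apply]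
  rw [← this]
  exact Finset.sum_congr rfl fun k _ => by ring

lemma procrustes {d : ℕ} (B : Matrix (Fin d) (Fin d) ℝ)
    (hc : ∀ x : Fin d → ℝ, (B *ᵥ x) ⬝ᵥ (B *ᵥ x) ≤ x ⬝ᵥ x) :
    ∃ O : Matrix (Fin d) (Fin d) ℝ, Oᵀ * O = 1 ∧
      Matrix.trace (Bᵀ * B) ≤ Matrix.trace (Oᵀ * B) := by
  have hG : (Bᵀ * B).IsHermitian := by
    have := Matrix.isHermitian_conjTranspose_mul_self B
    rwa [Matrix.conjTranspose_eq_transpose_of_trivial] at this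
  set G := Bᵀ * B with hGdef
  set q : Fin d → EuclideanSpace ℝ (Fin d) := fun i => hG.eigenvectorBasis i with hq
  set D : Fin d → ℝ := hG.eigenvalues with hD
  have hqon : Orthonormal ℝ q := hG.eigenvectorBasis.orthonormal
  have hqdot : ∀ i j, (q i : Fin d → ℝ) ⬝ᵥ (q j : Fin d → ℝ) = if i = j then 1 else 0 := by
    intro i j
    have := orthonormal_iff_ite.mp hqon i j
    simp only [PiLp.inner_apply, RCLike.inner_apply, starRingEnd_apply, star_trivial] at this
    rw [← this]
    exact Finset.sum_congr rfl fun k _ => by ring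
  have heig : ∀ i, G *ᵥ (q i : Fin d → ℝ) = D i • (q i : Fin d → ℝ) := fun i =>
    hG.mulVec_eigenvectorBasis i
  have hBq : ∀ i j, (B *ᵥ (q i : Fin d → ℝ)) ⬝ᵥ (B *ᵥ (q j : Fin d → ℝ))
      = if i = j then D j else 0 := by
    intro i j
    rw [dot_mulVec_left, Matrix.mulVec_mulVec, ← hGdef, heig, dotProduct_smul,
      smul_eq_mul, hqdot]
    by_cases h : i = j <;> simp [h]
  have hD0 : ∀ i, 0 ≤ D i := by
    intro i
    have h := hBq i i
    rw [if_pos rfl] at h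
    rw [← h]; exact dot_nonneg _
  have hD1 : ∀ i, D i ≤ 1 := by
    intro i
    have h1 := hBq i i
    rw [if_pos rfl] at h1
    have h2 := hc (q i)
    rw [h1, hqdot i i, if_pos rfl] at h2
    exact h2
  -- candidate left singular vectors
  set v : Fin d → EuclideanSpace ℝ (Fin d) :=
    fun i => if 0 < D i then WithLp.toLp 2 ((Real.sqrt (D i))⁻¹ • (B *ᵥ (q i : Fin d → ℝ))) else 0 with hv
  have hinner : ∀ x y : EuclideanSpace ℝ (Fin d), (inner ℝ x y : ℝ) = (x : Fin d → ℝ) ⬝ᵥ y := by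
    intro x y
    simp [PiLp.inner_apply, dotProduct]
    exact Finset.sum_congr rfl fun k _ => by ring
  have hvon : Orthonormal ℝ (Set.restrict {i | 0 < D i} v) := by
    rw [orthonormal_iff_ite]
    rintro ⟨i, hi⟩ ⟨j, hj⟩
    have hi' : 0 < D i := hi
    have hj' : 0 < D j := hj
    simp only [Set.restrict_apply, hv]
    dsimp only [Set.restrict, Set.domRestrict]
    rw [if_pos hi', if_pos hj', hinner]
    show ((Real.sqrt (D i))⁻¹ • (B *ᵥ (q i : Fin d → ℝ)))
      ⬝ᵥ ((Real.sqrt (D j))⁻¹ • (B *ᵥ (q j : Fin d → ℝ))) = _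
    rw [smul_dotProduct, dotProduct_smul, hBq i j, smul_eq_mul, smul_eq_mul]
    by_cases hij : i = j
    · subst hij
      rw [if_pos rfl, if_pos (show (⟨i, hi⟩ : {i | 0 < D i}) = ⟨i, hj⟩ from rfl)]
      rw [← Real.sqrt_mul_self (hD0 i)]
      have hs : Real.sqrt (D i) ≠ 0 := by positivity
      field_simp
      rw [Real.sq_sqrt (Real.sqrt_nonneg _)]
    · rw [if_neg hij, if_neg (fun h => hij (congrArg Subtype.val h))]
      ring
  obtain ⟨b, hb⟩ := hvon.exists_orthonormalBasis_extension_of_card_eq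
    (by simp [finrank_euclideanSpace])
  set Ub : Matrix (Fin d) (Fin d) ℝ := Matrix.of fun k i => b i k with hUb
  set Qm : Matrix (Fin d) (Fin d) ℝ := Matrix.of fun k i => q i k with hQm
  have hUb1 : Ubᵀ * Ub = 1 := gram_one _ b.orthonormal
  have hQm1 : Qmᵀ * Qm = 1 := gram_one _ hqon
  refine ⟨Ub * Qmᵀ, ?_, ?_⟩
  · rw [Matrix.transpose_mul, Matrix.transpose_transpose, Matrix.mul_assoc,
      ← Matrix.mul_assoc Ubᵀ, hUb1, Matrix.one_mul]
    exact mul_eq_one_comm.mp hQm1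
  · -- trace computation
    have htr : Matrix.trace ((Ub * Qmᵀ)ᵀ * B)
        = ∑ i, (b i : Fin d → ℝ) ⬝ᵥ (B *ᵥ (q i : Fin d → ℝ)) := by
      rw [Matrix.transpose_mul, Matrix.transpose_transpose, Matrix.mul_assoc,
        Matrix.trace_mul_comm, Matrix.mul_assoc]
      simp only [hUb, hQm, Matrix.trace, Matrix.diag_apply, Matrix.mul_apply,
        Matrix.transpose_apply, Matrix.of_apply, Matrix.mulVec, dotProduct]
    have htrG : Matrix.trace G = ∑ i, D i := by
      have hst := hG.spectral_theorem
      have hUU : (star (hG.eigenvectorUnitary : Matrix (Fin d) (Fin d) ℝ)) *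
          (hG.eigenvectorUnitary : Matrix (Fin d) (Fin d) ℝ) = 1 := by
        exact Unitary.coe_star_mul_self _
      calc Matrix.trace G
          = Matrix.trace ((hG.eigenvectorUnitary : Matrix (Fin d) (Fin d) ℝ) *
            Matrix.diagonal (RCLike.ofReal ∘ hG.eigenvalues) *
            (star (hG.eigenvectorUnitary : Matrix (Fin d) (Fin d) ℝ))) := by conv_lhs => rw [hst, Unitary.conjStarAlgAut_apply]
        _ = Matrix.trace ((star (hG.eigenvectorUnitary : Matrix (Fin d) (Fin d) ℝ)) *
            ((hG.eigenvectorUnitary : Matrix (Fin d) (Fin d) ℝ) *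
            Matrix.diagonal (RCLike.ofReal ∘ hG.eigenvalues))) := by
            rw [Matrix.trace_mul_comm]
        _ = Matrix.trace (Matrix.diagonal (RCLike.ofReal ∘ hG.eigenvalues)) := by
            rw [← Matrix.mul_assoc, hUU, Matrix.one_mul]
        _ = ∑ i, D i := by simp [Matrix.trace_diagonal, hD]
    rw [htrG, htr]
    refine Finset.sum_le_sum fun i _ => ?_
    by_cases hi : 0 < D i
    · have hbi : b i = v i := hb i hi
      rw [hbi]
      simp only [hv, if_pos hi]
      show D i ≤ ((Real.sqrt (D i))⁻¹ • (B *ᵥ (q i : Fin d → ℝ))) ⬝ᵥ (B *ᵥ (q i : Fin d → ℝ))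
      rw [smul_dotProduct, hBq, if_pos rfl, smul_eq_mul]
      have hsq : (Real.sqrt (D i))⁻¹ * D i = Real.sqrt (D i) := by
        rw [← Real.sqrt_mul_self (hD0 i)]
        have hs : Real.sqrt (D i) ≠ 0 := by positivity
        field_simp
        rw [Real.sq_sqrt (Real.sqrt_nonneg _)]
      rw [hsq]
      have := Real.sqrt_le_sqrt (hD1 i)
      nlinarith [Real.sq_sqrt (hD0 i), Real.sqrt_nonneg (D i), hD0 i, hD1 i,
        Real.sqrt_le_sqrt (hD1 i), Real.sqrt_one]
    · have hDi : D i = 0 := le_antisymm (not_lt.mp hi) (hD0 i)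
      have hBqi : (B *ᵥ (q i : Fin d → ℝ)) = 0 := by
        apply dot_eq_zero
        rw [hBq, if_pos rfl, hDi]
      rw [hBqi, hDi]
      simp

lemma trace_transpose_mul_self {m n : Type*} [Fintype m] [Fintype n] (A : Matrix m n ℝ) :
    Matrix.trace (Aᵀ * A) = ∑ i, ∑ j, (A i j) ^ 2 := by
  simp only [Matrix.trace, Matrix.diag_apply, Matrix.mul_apply, Matrix.transpose_apply, sq]
  exact Finset.sum_comm

noncomputable def frobNorm {m n : Type*} [Fintype m] [Fintype n] (A : Matrix m n ℝ) : ℝ :=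
  Real.sqrt (∑ i, ∑ j, (A i j) ^ 2)

noncomputable def opNorm {p q : ℕ} (A : Matrix (Fin p) (Fin q) ℝ) : ℝ :=
  ‖LinearMap.toContinuousLinearMap (Matrix.toEuclideanLin A)‖

lemma frobNorm_eq {m n : Type*} [Fintype m] [Fintype n] (A : Matrix m n ℝ) :
    frobNorm A = Real.sqrt (Matrix.trace (Aᵀ * A)) := by
  rw [frobNorm, trace_transpose_mul_self]

lemma trace_tms_nonneg {m n : Type*} [Fintype m] [Fintype n] (A : Matrix m n ℝ) :
    0 ≤ Matrix.trace (Aᵀ * A) := by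
  rw [trace_transpose_mul_self]
  exact Finset.sum_nonneg fun i _ => Finset.sum_nonneg fun j _ => sq_nonneg _

theorem stmt19
    (p r s d : ℕ) (hr : 1 ≤ r) (hrs : r ≤ s) (hsp : s ≤ p) (hd : d = s - r + 1)
    (lam lamh : ℕ → ℝ)
    (hmono : ∀ i j, 1 ≤ i → i ≤ j → j ≤ p → lam j ≤ lam i)
    (hmonoh : ∀ i j, 1 ≤ i → i ≤ j → j ≤ p → lamh j ≤ lamh i)
    (S Sh : Matrix (Fin p) (Fin p) ℝ) (hSsymm : S.IsSymm) (hShsymm : Sh.IsSymm)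
    (hSspec : ∃ Q : Matrix (Fin p) (Fin p) ℝ, Qᵀ * Q = 1 ∧
      S = Q * Matrix.diagonal (fun i : Fin p => lam (i.1 + 1)) * Qᵀ)
    (hShspec : ∃ Q : Matrix (Fin p) (Fin p) ℝ, Qᵀ * Q = 1 ∧
      Sh = Q * Matrix.diagonal (fun i : Fin p => lamh (i.1 + 1)) * Qᵀ)
    (δ : ℝ) (hδ : 0 < δ)
    (hgapr : 1 < r → δ ≤ lam (r - 1) - lam r)
    (hgaps : s < p → δ ≤ lam s - lam (s + 1))
    (V Vh : Matrix (Fin p) (Fin d) ℝ) (hV : Vᵀ * V = 1) (hVh : Vhᵀ * Vh = 1)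
    (hVeig : ∀ j : Fin d, S.mulVec (fun i => V i j) = lam (r + j.1) • (fun i => V i j))
    (hVheig : ∀ j : Fin d, Sh.mulVec (fun i => Vh i j) = lamh (r + j.1) • (fun i => Vh i j)) :
    ∃ O : Matrix (Fin d) (Fin d) ℝ, Oᵀ * O = 1 ∧
      frobNorm (Vh * O - V) ≤
        Real.sqrt 2 *
          frobNorm (Vh * Matrix.diagonal (fun j : Fin d => lam (r + j.1)) - S * Vh) / δ := by
  classical
  obtain ⟨Q, hQ1, hQspec⟩ := hSspec
  have hQ2 : Q * Qᵀ = 1 := mul_eq_one_comm.mp hQ1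
  set Λ : Matrix (Fin d) (Fin d) ℝ := Matrix.diagonal (fun j : Fin d => lam (r + j.1)) with hΛ
  set Dm : Matrix (Fin p) (Fin p) ℝ := Matrix.diagonal (fun i : Fin p => lam (i.1 + 1)) with hDm
  set W : Matrix (Fin p) (Fin d) ℝ := Qᵀ * Vh with hW
  set U : Matrix (Fin p) (Fin d) ℝ := Qᵀ * V with hU
  set E : Matrix (Fin p) (Fin d) ℝ := Vh * Λ - S * Vh with hE
  have hQV : Q * U = V := by rw [hU, ← Matrix.mul_assoc, hQ2, Matrix.one_mul]
  have hQW : Q * W = Vh := by rw [hW, ← Matrix.mul_assoc, hQ2, Matrix.one_mul]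
  -- eigen equations in matrix form
  have hSV : S * V = V * Λ := by
    ext i j
    have h := congrFun (hVeig j) i
    simp only [Matrix.mulVec, dotProduct, Pi.smul_apply, smul_eq_mul] at h
    rw [Matrix.mul_apply, hΛ, Matrix.mul_diagonal]
    rw [h]; ring
  -- gap facts
  have hgap : ∀ (i : Fin p) (j : Fin d), (i.1 + 1 < r ∨ s < i.1 + 1) →
      δ ^ 2 ≤ (lam (r + j.1) - lam (i.1 + 1)) ^ 2 := by
    intro i j hij
    have hj2 : j.1 < d := j.2
    have hi2 : i.1 < p := i.2
    rcases hij with h | h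
    · have h1 : lam (r - 1) ≤ lam (i.1 + 1) := hmono (i.1 + 1) (r - 1) (by omega) (by omega)
        (by omega)
      have h2 : δ ≤ lam (r - 1) - lam r := hgapr (by omega)
      have h3 : lam (r + j.1) ≤ lam r := hmono r (r + j.1) hr (by omega) (by omega)
      nlinarith
    · have h1 : lam (i.1 + 1) ≤ lam (s + 1) := hmono (s + 1) (i.1 + 1) (by omega) (by omega)
        (by omega)
      have h2 : δ ≤ lam s - lam (s + 1) := hgaps (by omega)
      have h3 : lam s ≤ lam (r + j.1) := hmono (r + j.1) s (by omega) (by omega) (by omega)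
      nlinarith
  -- U vanishes outside the window
  have hDU : Dm * U = U * Λ := by
    have hQS : Qᵀ * S = Dm * Qᵀ := by
      rw [hQspec, ← Matrix.mul_assoc, ← Matrix.mul_assoc, hQ1, Matrix.one_mul]
    rw [hU, ← Matrix.mul_assoc, ← hQS, Matrix.mul_assoc, hSV, ← Matrix.mul_assoc]
  have hUzero : ∀ (i : Fin p) (j : Fin d), (i.1 + 1 < r ∨ s < i.1 + 1) → U i j = 0 := by
    intro i j hij
    have h := congrFun (congrFun hDU i) j
    rw [hDm, Matrix.diagonal_mul, hΛ, Matrix.mul_diagonal] at h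
    have hne : lam (i.1 + 1) - lam (r + j.1) ≠ 0 := by
      intro h0
      have := hgap i j hij
      nlinarith
    have : (lam (i.1 + 1) - lam (r + j.1)) * U i j = 0 := by rw [sub_mul, h]; ring
    exact (mul_eq_zero.mp this).resolve_left hne
  -- index embedding
  have hdpos : ∀ a : Fin d, r - 1 + a.1 < p := by intro a; have := a.2; omega
  set emb : Fin d → Fin p := fun a => ⟨r - 1 + a.1, hdpos a⟩ with hemb
  have hemb_inj : Function.Injective emb := by
    intro a b hab
    have : r - 1 + a.1 = r - 1 + b.1 := congrArg Fin.val hab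
    exact Fin.ext (by omega)
  have hsum : ∀ f : Fin p → ℝ, (∀ i, (i.1 + 1 < r ∨ s < i.1 + 1) → f i = 0) →
      ∑ i, f i = ∑ a, f (emb a) := by
    intro f hz
    have himg : Finset.univ.filter (fun i : Fin p => r ≤ i.1 + 1 ∧ i.1 + 1 ≤ s)
        = Finset.image emb Finset.univ := by
      ext i
      simp only [Finset.mem_filter, Finset.mem_univ, true_and, Finset.mem_image]
      constructor
      · rintro ⟨h1, h2⟩
        refine ⟨⟨i.1 - (r - 1), by omega⟩, Fin.ext ?_⟩
        simp only [hemb]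
        omega
      · rintro ⟨a, rfl⟩
        have := a.2
        simp only [hemb]
        omega
    rw [← Finset.sum_filter_of_ne (p := fun i : Fin p => r ≤ i.1 + 1 ∧ i.1 + 1 ≤ s)
      (fun i _ h => by by_contra hp; push_neg at hp; exact h (hz i (by omega)))]
    rw [himg, Finset.sum_image (fun a _ b _ h => hemb_inj h)]
  set Uin : Matrix (Fin d) (Fin d) ℝ := Matrix.of (fun a j => U (emb a) j) with hUin
  set Win : Matrix (Fin d) (Fin d) ℝ := Matrix.of (fun a j => W (emb a) j) with hWin
  have hUU : Uᵀ * U = 1 := by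
    rw [hU, Matrix.transpose_mul, Matrix.transpose_transpose, Matrix.mul_assoc,
      ← Matrix.mul_assoc Q, hQ2, Matrix.one_mul, hV]
  have hUinUin : Uinᵀ * Uin = 1 := by
    ext j k
    rw [Matrix.mul_apply]
    have h1 : ∑ a : Fin d, Uinᵀ j a * Uin a k = ∑ a : Fin d, U (emb a) j * U (emb a) k :=
      Finset.sum_congr rfl fun a _ => rfl
    rw [h1, ← hsum (fun i => U i j * U i k)
      (fun i hi => by show U i j * U i k = 0; rw [hUzero i j hi, zero_mul])]
    rw [← hUU, Matrix.mul_apply]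
    exact Finset.sum_congr rfl fun i _ => rfl
  have hUinUinT : Uin * Uinᵀ = 1 := mul_eq_one_comm.mp hUinUin
  set M : Matrix (Fin d) (Fin d) ℝ := Vᵀ * Vh with hM
  have hMeq : M = Uinᵀ * Win := by
    have h1 : Uᵀ * W = M := by
      rw [hU, hW, hM, Matrix.transpose_mul, Matrix.transpose_transpose, Matrix.mul_assoc,
        ← Matrix.mul_assoc Q, hQ2, Matrix.one_mul]
    rw [← h1]
    ext j k
    rw [Matrix.mul_apply, Matrix.mul_apply]
    rw [show ∑ i, Uᵀ j i * W i k = ∑ i, (fun i => U i j * W i k) i from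
      Finset.sum_congr rfl fun i _ => rfl]
    rw [hsum (fun i => U i j * W i k)
      (fun i hi => by show U i j * W i k = 0; rw [hUzero i j hi, zero_mul])]
    exact Finset.sum_congr rfl fun a _ => rfl
  have htrM : Matrix.trace (Mᵀ * M) = Matrix.trace (Winᵀ * Win) := by
    rw [hMeq, Matrix.transpose_mul, Matrix.transpose_transpose, Matrix.mul_assoc,
      ← Matrix.mul_assoc Uin, hUinUinT, Matrix.one_mul]
  have htrW : Matrix.trace (Wᵀ * W) = (d : ℝ) := by
    rw [hW, Matrix.transpose_mul, Matrix.transpose_transpose, Matrix.mul_assoc,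
      ← Matrix.mul_assoc Q, hQ2, Matrix.one_mul, hVh]
    simp [Matrix.trace_one]
  -- the residual matrix in the eigenbasis
  set F : Matrix (Fin p) (Fin d) ℝ := W * Λ - Dm * W with hF
  have hSVh : S * Vh = Q * (Dm * W) := by
    rw [hQspec, Matrix.mul_assoc, ← hW, Matrix.mul_assoc]
  have hEQ : E = Q * F := by
    rw [hE, hF, Matrix.mul_sub, ← Matrix.mul_assoc Q W, hQW, hSVh]
  have htrE : Matrix.trace (Eᵀ * E) = Matrix.trace (Fᵀ * F) := by
    rw [hEQ, Matrix.transpose_mul, Matrix.mul_assoc, ← Matrix.mul_assoc Qᵀ, hQ1,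
      Matrix.one_mul]
  -- the image description of the window
  have himg : Finset.univ.filter (fun i : Fin p => r ≤ i.1 + 1 ∧ i.1 + 1 ≤ s)
      = Finset.image emb Finset.univ := by
    ext i
    simp only [Finset.mem_filter, Finset.mem_univ, true_and, Finset.mem_image]
    constructor
    · rintro ⟨h1, h2⟩
      refine ⟨⟨i.1 - (r - 1), by omega⟩, Fin.ext ?_⟩
      simp only [hemb]
      omega
    · rintro ⟨a, rfl⟩
      have := a.2
      simp only [hemb]
      omega
  have hFil : ∑ i ∈ Finset.univ.filter (fun i : Fin p => r ≤ i.1 + 1 ∧ i.1 + 1 ≤ s),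
      (∑ j, (W i j) ^ 2) = ∑ a : Fin d, ∑ j, (W (emb a) j) ^ 2 := by
    rw [himg, Finset.sum_image (fun a _ b _ h => hemb_inj h)]
  have hWinsq : Matrix.trace (Winᵀ * Win) = ∑ a : Fin d, ∑ j, (W (emb a) j) ^ 2 := by
    rw [trace_transpose_mul_self]
    refine Finset.sum_congr rfl fun a _ => Finset.sum_congr rfl fun j _ => ?_
    rw [hWin]
    rfl
  have hWsq : Matrix.trace (Wᵀ * W) = ∑ i, ∑ j, (W i j) ^ 2 := trace_transpose_mul_self W
  have hsplit := Finset.sum_filter_add_sum_filter_not Finset.univ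
    (fun i : Fin p => r ≤ i.1 + 1 ∧ i.1 + 1 ≤ s) (fun i : Fin p => ∑ j, (W i j) ^ 2)
  have hout : (d : ℝ) - Matrix.trace (Mᵀ * M)
      = ∑ i ∈ Finset.univ.filter (fun i : Fin p => ¬(r ≤ i.1 + 1 ∧ i.1 + 1 ≤ s)),
        (∑ j, (W i j) ^ 2) := by
    have h1 : Matrix.trace (Mᵀ * M) = ∑ a : Fin d, ∑ j, (W (emb a) j) ^ 2 := by
      rw [htrM, hWinsq]
    rw [h1, ← hFil, ← htrW, hWsq, ← hsplit]
    ring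
  have key : δ ^ 2 * ((d : ℝ) - Matrix.trace (Mᵀ * M)) ≤ Matrix.trace (Eᵀ * E) := by
    rw [hout, htrE, trace_transpose_mul_self]
    have hFentry : ∀ (i : Fin p) (j : Fin d),
        F i j = W i j * (lam (r + j.1) - lam (i.1 + 1)) := by
      intro i j
      rw [hF]
      simp only [Matrix.sub_apply, hΛ, hDm, Matrix.mul_diagonal, Matrix.diagonal_mul]
      ring
    calc δ ^ 2 * ∑ i ∈ Finset.univ.filter (fun i : Fin p => ¬(r ≤ i.1 + 1 ∧ i.1 + 1 ≤ s)),
          (∑ j, (W i j) ^ 2)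
        ≤ ∑ i ∈ Finset.univ.filter (fun i : Fin p => ¬(r ≤ i.1 + 1 ∧ i.1 + 1 ≤ s)),
          (∑ j, (F i j) ^ 2) := by
          rw [Finset.mul_sum]
          refine Finset.sum_le_sum fun i hi => ?_
          rw [Finset.mul_sum]
          refine Finset.sum_le_sum fun j _ => ?_
          have hi' : i.1 + 1 < r ∨ s < i.1 + 1 := by
            have := (Finset.mem_filter.mp hi).2
            omega
          rw [hFentry i j, mul_pow]
          have := hgap i j hi'
          nlinarith [sq_nonneg (W i j)]
      _ ≤ ∑ i, ∑ j, (F i j) ^ 2 := by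
          refine Finset.sum_le_sum_of_subset_of_nonneg (Finset.filter_subset _ _)
            fun i _ _ => Finset.sum_nonneg fun j _ => sq_nonneg _
  -- Procrustes step
  set B : Matrix (Fin d) (Fin d) ℝ := Vhᵀ * V with hB
  have hcontr : ∀ x : Fin d → ℝ, (B *ᵥ x) ⬝ᵥ (B *ᵥ x) ≤ x ⬝ᵥ x := by
    intro x
    have hBx : B *ᵥ x = Vhᵀ *ᵥ (V *ᵥ x) := by rw [hB, ← Matrix.mulVec_mulVec]
    set y := V *ᵥ x with hy
    have hyy : y ⬝ᵥ y = x ⬝ᵥ x := by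
      rw [hy, dot_mulVec_left, Matrix.mulVec_mulVec, hV, Matrix.one_mulVec]
    have h1 : (Vhᵀ *ᵥ y) ⬝ᵥ (Vhᵀ *ᵥ y) = y ⬝ᵥ ((Vh * Vhᵀ) *ᵥ y) := by
      rw [dot_mulVec_left, Matrix.transpose_transpose, Matrix.mulVec_mulVec]
    set Pm := Vh * Vhᵀ with hPm
    have hPP : Pm * Pm = Pm := by
      rw [hPm, Matrix.mul_assoc, ← Matrix.mul_assoc Vhᵀ, hVh, Matrix.one_mul]
    set N := (1 : Matrix (Fin p) (Fin p) ℝ) - Pm with hN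
    have hNt : Nᵀ = N := by
      rw [hN, Matrix.transpose_sub, Matrix.transpose_one, hPm, Matrix.transpose_mul,
        Matrix.transpose_transpose]
    have hNN : N * N = N := by
      rw [hN, Matrix.sub_mul, Matrix.mul_sub, Matrix.mul_sub, hPP]
      simp only [Matrix.one_mul, Matrix.mul_one, hPm]
      abel
    have hpos : 0 ≤ y ⬝ᵥ (N *ᵥ y) := by
      have h2 : y ⬝ᵥ (N *ᵥ y) = (N *ᵥ y) ⬝ᵥ (N *ᵥ y) := by
        conv_lhs => rw [← hNN, ← Matrix.mulVec_mulVec, ← hNt]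
        rw [← dot_mulVec_left, hNt]
      rw [h2]
      exact dot_nonneg _
    have hsub : y ⬝ᵥ (N *ᵥ y) = y ⬝ᵥ y - y ⬝ᵥ (Pm *ᵥ y) := by
      rw [hN, Matrix.sub_mulVec, dotProduct_sub, Matrix.one_mulVec]
    rw [hBx, h1, ← hyy]
    linarith
  obtain ⟨O, hO1, hOtr⟩ := procrustes B hcontr
  refine ⟨O, hO1, ?_⟩
  have htrB : Matrix.trace (Bᵀ * B) = Matrix.trace (Mᵀ * M) := by
    rw [Matrix.trace_mul_comm]
    congr 1
    rw [hB, hM, Matrix.transpose_mul, Matrix.transpose_mul, Matrix.transpose_transpose,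
      Matrix.transpose_transpose]
  have hexp : Matrix.trace ((Vh * O - V)ᵀ * (Vh * O - V))
      = 2 * (d : ℝ) - 2 * Matrix.trace (Oᵀ * B) := by
    have e1 : (Vh * O - V)ᵀ * (Vh * O - V)
        = Oᵀ * Vhᵀ * Vh * O - Oᵀ * Vhᵀ * V - Vᵀ * Vh * O + Vᵀ * V := by
      rw [Matrix.transpose_sub, Matrix.transpose_mul, Matrix.sub_mul, Matrix.mul_sub,
        Matrix.mul_sub, ← Matrix.mul_assoc (Oᵀ * Vhᵀ) Vh O, ← Matrix.mul_assoc Vᵀ Vh O]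
      abel
    have e2 : Oᵀ * Vhᵀ * Vh * O = (1 : Matrix (Fin d) (Fin d) ℝ) := by
      rw [Matrix.mul_assoc Oᵀ Vhᵀ Vh, hVh, Matrix.mul_one, hO1]
    have e3 : Oᵀ * Vhᵀ * V = Oᵀ * B := by rw [Matrix.mul_assoc, hB]
    have e4 : Matrix.trace (Vᵀ * Vh * O) = Matrix.trace (Oᵀ * B) := by
      rw [← Matrix.trace_transpose (Vᵀ * Vh * O), Matrix.transpose_mul, Matrix.transpose_mul,
        Matrix.transpose_transpose, hB]
    rw [e1, Matrix.trace_add, Matrix.trace_sub, Matrix.trace_sub, e2, e3, e4, hV,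
      Matrix.trace_one]
    simp
    ring
  have hδ2 : (0 : ℝ) < δ ^ 2 := by positivity
  have h2 : Matrix.trace ((Vh * O - V)ᵀ * (Vh * O - V))
      ≤ 2 * Matrix.trace (Eᵀ * E) / δ ^ 2 := by
    rw [hexp, le_div_iff₀ hδ2]
    have hOtr' : Matrix.trace (Mᵀ * M) ≤ Matrix.trace (Oᵀ * B) := by
      rw [← htrB]; exact hOtr
    nlinarith [key, hOtr', hδ2]
  rw [frobNorm_eq, frobNorm_eq]
  have hsqrt : Real.sqrt 2 * Real.sqrt (Matrix.trace (Eᵀ * E)) / δ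
      = Real.sqrt (2 * Matrix.trace (Eᵀ * E) / δ ^ 2) := by
    rw [show 2 * Matrix.trace (Eᵀ * E) / δ ^ 2
        = (Real.sqrt 2 * Real.sqrt (Matrix.trace (Eᵀ * E)) / δ) ^ 2 from by
      rw [div_pow, mul_pow, Real.sq_sqrt (by norm_num : (0:ℝ) ≤ 2),
        Real.sq_sqrt (trace_tms_nonneg E)],
      Real.sqrt_sq (by positivity)]
  rw [hsqrt]
  exact Real.sqrt_le_sqrt h2
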